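/- In the uninode single-period system with zero minimum output limits and fixed load part Σ_j d_j^min ≥ g_{i₀}^max for some generator i₀, the maximum technologically and economically feasible output of generator i₀ equals its maximum output limit: ḡ_{i₀}^max = g_{i₀}^max. -/
import Mathlib


/-- Proposition 3, second bullet: in the uninode single-period system with zero minimum
output limits, if the fixed load part of demand satisfies `Σ_j d_j^min ≥ g_{i₀}^max`,
then the maximum technologically and economically feasible output of generator `i₀`
(the greatest output attainable in a dispatch exactly covering the fixed load) equals
its maximum output limit `g_{i₀}^max`. -/
theorem stmt16 {I J : Type*} [Fintype I] [Fintype J]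
    (gmax : I → ℝ) (dmin : J → ℝ) (i0 : I)
    (hg : ∀ i, 0 ≤ gmax i) (hd : ∀ j, 0 ≤ dmin j)
    (hload : gmax i0 ≤ ∑ j, dmin j)
    (hfeas : ∑ j, dmin j ≤ ∑ i, gmax i) :
    IsGreatest {g | ∃ out : I → ℝ, (∀ i, 0 ≤ out i ∧ out i ≤ gmax i) ∧
        (∑ i, out i) = ∑ j, dmin j ∧ out i0 = g} (gmax i0) := by
  classical
  constructor
  · -- membership
    set D := ∑ j, dmin j with hD
    set S' := ∑ i ∈ Finset.univ.erase i0, gmax i with hS'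
    have hsplit : ∑ i, gmax i = gmax i0 + S' := by
      rw [hS', ← Finset.add_sum_erase _ _ (Finset.mem_univ i0)]
    have hS'nonneg : 0 ≤ S' := Finset.sum_nonneg fun i _ => hg i
    have hDS : D - gmax i0 ≤ S' := by
      have := hfeas; rw [hsplit] at this; linarith
    by_cases hS0 : S' = 0
    · refine ⟨fun i => if i = i0 then gmax i0 else 0, ?_, ?_, by simp⟩
      · intro i; by_cases h : i = i0 <;> simp [h, hg i, hg i0]
      · have hDeq : D = gmax i0 := le_antisymm (by linarith) hload
        rw [Finset.sum_ite_eq' Finset.univ i0]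
        simp [hDeq]
    · set t := (D - gmax i0) / S' with ht
      have hS'pos : 0 < S' := lt_of_le_of_ne hS'nonneg (Ne.symm hS0)
      have ht0 : 0 ≤ t := div_nonneg (by linarith) hS'nonneg
      have ht1 : t ≤ 1 := by rw [ht, div_le_one hS'pos]; linarith
      refine ⟨fun i => if i = i0 then gmax i0 else t * gmax i, ?_, ?_, by simp⟩
      · intro i; by_cases h : i = i0
        · simp [h, hg i0]
        · simp only [h, if_false]
          exact ⟨mul_nonneg ht0 (hg i),
            by nlinarith [hg i]⟩
      · rw [← Finset.add_sum_erase _ _ (Finset.mem_univ i0)]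
        simp only [if_pos rfl]
        have : ∑ i ∈ Finset.univ.erase i0, (if i = i0 then gmax i0 else t * gmax i)
            = t * S' := by
          rw [hS', Finset.mul_sum]
          apply Finset.sum_congr rfl
          intro i hi
          simp [Finset.ne_of_mem_erase hi]
        rw [this, ht, div_mul_cancel₀ _ hS0]
        norm_num
  · rintro g ⟨out, hout, _, rfl⟩
    exact (hout i0).2
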